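/- Let L be a finite distributive lattice with least element ⊥ and greatest element ⊤, and let μ, ν : L → ℝ be valuations with ν strictly monotone and μ monotone. Then for every maximal chain ⊥ = m_0 ⋖ m_1 ⋖ ⋯ ⋖ m_r = ⊤ in L, the divergence of the chain equals the sum over all join-irreducible elements j of L of f(Δμ(j)/Δν(j))·Δν(j), where Δμ(j) = μ(j) − μ(j⁻), Δν(j) = ν(j) − ν(j⁻), and j⁻ is the unique element covered by j. -/

import Mathlib

/-- The function `f(x) = x·ln x − (x − 1)` (note `f 0 = 1` since `Real.log 0 = 0`). -/
noncomputable def divF (x : ℝ) : ℝ := x * Real.log x - (x - 1)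

/-- Existence of a sup-irreducible witness for a covering relation in a finite lattice. -/
lemma exists_supIrred_of_covBy {L : Type*} [Lattice L] [Fintype L] [OrderBot L]
    {a b : L} (hab : a ⋖ b) : ∃ j : L, SupIrred j ∧ j ≤ b ∧ ¬ j ≤ a := by
  classical
  set S : Finset L := Finset.univ.filter (fun x => x ≤ b ∧ ¬ x ≤ a) with hS
  have hbS : b ∈ S := by simp [hS, hab.lt.not_ge]
  obtain ⟨j, hjS, hjmin⟩ := S.exists_minimal ⟨b, hbS⟩
  simp only [hS, Finset.mem_filter, Finset.mem_univ, true_and] at hjS hjmin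
  refine ⟨j, ⟨?_, ?_⟩, hjS.1, hjS.2⟩
  · intro hmin
    exact hjS.2 ((hmin bot_le).trans bot_le)
  · intro u v huv
    by_contra h
    push_neg at h
    have hu : u < j := lt_of_le_of_ne (huv ▸ le_sup_left) h.1
    have hv : v < j := lt_of_le_of_ne (huv ▸ le_sup_right) h.2
    have hua : u ≤ a := by
      by_contra hua
      exact hu.not_ge (hjmin ⟨hu.le.trans hjS.1, hua⟩ hu.le)
    have hva : v ≤ a := by
      by_contra hva
      exact hv.not_ge (hjmin ⟨hv.le.trans hjS.1, hva⟩ hv.le)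
    exact hjS.2 (huv ▸ sup_le hua hva)

lemma sup_eq_of_covBy {L : Type*} [Lattice L] {a b j : L} (hab : a ⋖ b)
    (hjb : j ≤ b) (hja : ¬ j ≤ a) : a ⊔ j = b := by
  rcases (sup_le hab.lt.le hjb).lt_or_eq with h | h
  · exact absurd h (hab.2 (left_lt_sup.2 hja))
  · exact h

/-- Uniqueness of the sup-irreducible witness, in a distributive lattice. -/
lemma supIrred_le_of_covBy {L : Type*} [DistribLattice L] {a b j j' : L} (hab : a ⋖ b)
    (hj : SupIrred j) (hjb : j ≤ b) (hja : ¬ j ≤ a)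
    (hj'b : j' ≤ b) (hj'a : ¬ j' ≤ a) : j ≤ j' := by
  have hsup : a ⊔ j' = b := sup_eq_of_covBy hab hj'b hj'a
  have hdec : (j ⊓ a) ⊔ (j ⊓ j') = j := by
    rw [← inf_sup_left, hsup, inf_eq_left.2 hjb]
  rcases hj.2 hdec with h | h
  · exact absurd (inf_eq_left.1 h) hja
  · exact inf_eq_left.1 h

lemma supIrred_unique_of_covBy {L : Type*} [DistribLattice L] {a b j j' : L} (hab : a ⋖ b)
    (hj : SupIrred j) (hjb : j ≤ b) (hja : ¬ j ≤ a)
    (hj' : SupIrred j') (hj'b : j' ≤ b) (hj'a : ¬ j' ≤ a) : j = j' :=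
  le_antisymm (supIrred_le_of_covBy hab hj hjb hja hj'b hj'a)
    (supIrred_le_of_covBy hab hj' hj'b hj'a hjb hja)

/-- The inf with `a` of the sup-irreducible witness is covered by the witness. -/
lemma inf_covBy_of_covBy {L : Type*} [DistribLattice L] {a b j : L} (hab : a ⋖ b)
    (hjb : j ≤ b) (hja : ¬ j ≤ a) : a ⊓ j ⋖ j := by
  constructor
  · exact inf_lt_right.2 hja
  · intro c h1 h2
    have hca : ¬ c ≤ a := fun h => h1.not_ge (le_inf h h2.le)
    have hb : a ⊔ c = b := sup_eq_of_covBy hab (h2.le.trans hjb) hca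
    have : j ≤ c := by
      have hdec : (j ⊓ a) ⊔ (j ⊓ c) = j := by
        rw [← inf_sup_left, hb, inf_eq_left.2 hjb]
      have h3 : j ⊓ a ≤ c := le_trans (by rw [inf_comm]; exact h1.le) le_rfl
      calc j = (j ⊓ a) ⊔ (j ⊓ c) := hdec.symm
        _ ≤ c ⊔ c := sup_le_sup h3 inf_le_right
        _ = c := sup_idem c
    exact h2.not_ge this

open Classical in
/-- In a finite distributive lattice with valuations `μ` (monotone) and `ν` (strictly
monotone), the divergence of any maximal chain equals the sum, over all
join-irreducible elements `j`, of `f(Δμ(j)/Δν(j))·Δν(j)`, where `Δμ(j) = μ j − μ j⁻`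
and `j⁻` (given by the function `p`) is the unique element covered by `j`. -/
theorem chain_divergence_eq_sum_over_irreducibles
    {L : Type*} [DistribLattice L] [Fintype L] [BoundedOrder L]
    (μ ν : L → ℝ)
    (hμ0 : μ ⊥ = 0) (hμmono : Monotone μ)
    (hμmod : ∀ a b : L, μ a + μ b = μ (a ⊓ b) + μ (a ⊔ b))
    (hν0 : ν ⊥ = 0) (hνsm : StrictMono ν)
    (hνmod : ∀ a b : L, ν a + ν b = ν (a ⊓ b) + ν (a ⊔ b))
    (p : L → L)
    (hp : ∀ j : L, SupIrred j → p j ⋖ j ∧ ∀ a : L, a ⋖ j → a = p j)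
    (r : ℕ) (m : Fin (r + 1) → L)
    (hm0 : m 0 = ⊥) (hmtop : m (Fin.last r) = ⊤)
    (hmcov : ∀ i : Fin r, m i.castSucc ⋖ m i.succ) :
    ∑ i : Fin r,
        divF ((μ (m i.succ) - μ (m i.castSucc)) / (ν (m i.succ) - ν (m i.castSucc)))
          * (ν (m i.succ) - ν (m i.castSucc))
      = ∑ j ∈ Finset.univ.filter (fun j : L => SupIrred j),
          divF ((μ j - μ (p j)) / (ν j - ν (p j))) * (ν j - ν (p j)) := by
  classical
  have hmmono : Monotone m :=
    (Fin.strictMono_iff_lt_succ.2 (fun i => (hmcov i).lt)).monotone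
  have exA : ∀ i : Fin r, ∃ j : L, SupIrred j ∧ j ≤ m i.succ ∧ ¬ j ≤ m i.castSucc :=
    fun i => exists_supIrred_of_covBy (hmcov i)
  set J : Fin r → L := fun i => (exA i).choose with hJ
  have hJspec : ∀ i : Fin r, SupIrred (J i) ∧ J i ≤ m i.succ ∧ ¬ J i ≤ m i.castSucc :=
    fun i => (exA i).choose_spec
  -- the key identity: p (J i) = m i.castSucc ⊓ J i, and m i.castSucc ⊔ J i = m i.succ
  have hpJ : ∀ i : Fin r, p (J i) = m i.castSucc ⊓ J i := fun i =>
    ((hp (J i) (hJspec i).1).2 _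
      (inf_covBy_of_covBy (hmcov i) (hJspec i).2.1 (hJspec i).2.2)).symm
  have hsupJ : ∀ i : Fin r, m i.castSucc ⊔ J i = m i.succ := fun i =>
    sup_eq_of_covBy (hmcov i) (hJspec i).2.1 (hJspec i).2.2
  refine Finset.sum_bij (fun i _ => J i) ?_ ?_ ?_ ?_
  · intro i _
    simp [(hJspec i).1]
  · -- injectivity
    have main : ∀ i i' : Fin r, i < i' → J i ≠ J i' := by
      intro i i' hlt hE
      have hle : i.succ ≤ i'.castSucc := by
        have : (i : ℕ) + 1 ≤ (i' : ℕ) := hlt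
        simpa [Fin.le_def] using this
      exact (hJspec i').2.2 (hE ▸ ((hJspec i).2.1.trans (hmmono hle)))
    intro i _ i' _ hE
    have hE' : J i = J i' := hE
    rcases lt_trichotomy i i' with h | h | h
    · exact absurd hE' (main i i' h)
    · exact h
    · exact absurd hE'.symm (main i' i h)
  · -- surjectivity
    intro j hjmem
    simp only [Finset.mem_filter, Finset.mem_univ, true_and] at hjmem
    have hjbot : ¬ j ≤ (⊥ : L) := by
      intro h
      exact hjmem.1 (by simpa [le_bot_iff.1 h] using isMin_bot)
    have key : ∃ i : Fin r, j ≤ m i.succ ∧ ¬ j ≤ m i.castSucc := by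
      by_contra h
      push_neg at h
      have step : ∀ k : ℕ, (hk : k ≤ r) → ¬ j ≤ m ⟨k, Nat.lt_succ_of_le hk⟩ := by
        intro k
        induction k with
        | zero =>
          intro _
          have : m ⟨0, Nat.lt_succ_of_le (Nat.zero_le r)⟩ = ⊥ := hm0
          rw [this]; exact hjbot
        | succ n ih =>
          intro hk
          have hn : n < r := hk
          have hcs : (⟨n, hn⟩ : Fin r).castSucc = ⟨n, Nat.lt_succ_of_le hn.le⟩ := rfl
          have hsc : (⟨n, hn⟩ : Fin r).succ = ⟨n + 1, Nat.lt_succ_of_le hk⟩ := rfl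
          intro hle
          exact ih hn.le (hcs ▸ h ⟨n, hn⟩ (hsc ▸ hle))
      have := step r le_rfl
      rw [show (⟨r, Nat.lt_succ_of_le le_rfl⟩ : Fin (r+1)) = Fin.last r from rfl, hmtop] at this
      exact this le_top
    obtain ⟨i, hi1, hi2⟩ := key
    exact ⟨i, Finset.mem_univ i,
      supIrred_unique_of_covBy (hmcov i) (hJspec i).1 (hJspec i).2.1 (hJspec i).2.2
        hjmem hi1 hi2⟩
  · -- term equality
    intro i _
    have hμeq : μ (m i.succ) - μ (m i.castSucc) = μ (J i) - μ (p (J i)) := by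
      have := hμmod (m i.castSucc) (J i)
      rw [hsupJ i, ← hpJ i] at this
      linarith
    have hνeq : ν (m i.succ) - ν (m i.castSucc) = ν (J i) - ν (p (J i)) := by
      have := hνmod (m i.castSucc) (J i)
      rw [hsupJ i, ← hpJ i] at this
      linarith
    rw [hμeq, hνeq]
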